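/- Let G be a topological group (a group with a topology making multiplication and inversion continuous) with identity e, and let κ be an infinite cardinal. Suppose N_e, the set of all neighborhoods of e in G ordered by reverse inclusion, has calibre (κ⁺, ω), where κ⁺ is the successor cardinal of κ. If A ⊆ G is precompact, meaning that for every neighborhood U of e there is a finite set F ⊆ G with A ⊆ ⋃_{g∈F} gU, then A, with the subspace topology, has a topological base of cardinality at most κ. -/

import Mathlib

open Set Topology Cardinal Pointwise

universe u
set_option linter.unusedSectionVars false

/-- A directed set `P` has calibre `(μ, ω)` if every subset of cardinality `μ`
has an infinite subset with an upper bound. -/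
def Calibre (P : Type u) [Preorder P] (μ : Cardinal.{u}) : Prop :=
  ∀ S : Set P, #S = μ → ∃ T ⊆ S, T.Infinite ∧ BddAbove T

/-- The poset of all neighborhoods of a point, ordered by reverse inclusion. -/
abbrev NbhdPoset {X : Type*} [TopologicalSpace X] (x : X) :=
  ({U : Set X // U ∈ nhds x})ᵒᵈ

section Helpers

variable {G : Type u} [Group G] [TopologicalSpace G] [IsTopologicalGroup G]

lemma exists_symm_quad (U : Set G) (hU : U ∈ nhds (1 : G)) :
    ∃ V : Set G, IsOpen V ∧ (1 : G) ∈ V ∧ (∀ g ∈ V, g⁻¹ ∈ V) ∧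
      (∀ a ∈ V, ∀ b ∈ V, ∀ c ∈ V, ∀ d ∈ V, a * b * c * d ∈ U) := by
  obtain ⟨W₁, hW₁o, hW₁1, hW₁⟩ := exists_open_nhds_one_mul_subset hU
  obtain ⟨W₂, hW₂o, hW₂1, hW₂⟩ := exists_open_nhds_one_mul_subset (hW₁o.mem_nhds hW₁1)
  refine ⟨W₂ ∩ W₂⁻¹, hW₂o.inter hW₂o.inv, ⟨hW₂1, by simpa using hW₂1⟩, ?_, ?_⟩
  · rintro g ⟨h1, h2⟩
    exact ⟨by simpa using h2, by simpa using h1⟩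
  · intro a ha b hb c hc d hd
    have h1 : a * b ∈ W₁ := hW₂ (Set.mul_mem_mul ha.1 hb.1)
    have h2 : c * d ∈ W₁ := hW₂ (Set.mul_mem_mul hc.1 hd.1)
    have h3 : a * b * (c * d) ∈ U := hW₁ (Set.mul_mem_mul h1 h2)
    rwa [← mul_assoc] at h3

section Chain

variable {β : Type u} [LinearOrder β] (hwf : WellFounded ((· < ·) : β → β → Prop))
  (T : Set β) (hne : ∀ s : Finset β, (T \ ↑s).Nonempty)

noncomputable def chainW : ℕ → Finset β
  | 0 => ∅
  | n + 1 => insert (hwf.min (T \ ↑(chainW n)) (hne _)) (chainW n)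

noncomputable def chainV (n : ℕ) : β := hwf.min (T \ ↑(chainW hwf T hne n)) (hne _)

lemma chainV_mem (n : ℕ) : chainV hwf T hne n ∈ T \ ↑(chainW hwf T hne n) :=
  hwf.min_mem _ _

lemma chainV_mem_succ (n : ℕ) : chainV hwf T hne n ∈ chainW hwf T hne (n + 1) := by
  show chainV hwf T hne n ∈ insert (chainV hwf T hne n) (chainW hwf T hne n)
  exact Finset.mem_insert_self _ _

lemma chainW_le : ∀ n m : ℕ, n ≤ m → chainW hwf T hne n ⊆ chainW hwf T hne m := by
  intro n m h
  induction h with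
  | refl => exact Finset.Subset.refl _
  | step h ih =>
      refine ih.trans ?_
      show chainW hwf T hne _ ⊆ insert (chainV hwf T hne _) (chainW hwf T hne _)
      exact Finset.subset_insert _ _

lemma chainV_strictMono : StrictMono (chainV hwf T hne) := by
  intro n m h
  have h1 : chainV hwf T hne n ∈ chainW hwf T hne m :=
    chainW_le hwf T hne (n + 1) m h (chainV_mem_succ hwf T hne n)
  have h2 : chainV hwf T hne m ∈ T \ ↑(chainW hwf T hne n) :=
    ⟨(chainV_mem hwf T hne m).1,
      fun hc => (chainV_mem hwf T hne m).2 (chainW_le hwf T hne n m h.le hc)⟩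
  have h3 : ¬ chainV hwf T hne m < chainV hwf T hne n :=
    hwf.not_lt_min (T \ ↑(chainW hwf T hne n)) h2
  have h4 : chainV hwf T hne m ≠ chainV hwf T hne n :=
    fun hc => (chainV_mem hwf T hne m).2 (hc ▸ h1)
  exact lt_of_le_of_ne (not_lt.mp h3) (Ne.symm h4)

end Chain

lemma strictMono_in_of_infinite {β : Type u} [LinearOrder β]
    (hwf : WellFounded ((· < ·) : β → β → Prop)) {T : Set β} (hT : T.Infinite) :
    ∃ v : ℕ → β, StrictMono v ∧ ∀ n, v n ∈ T := by
  have hne : ∀ s : Finset β, (T \ ↑s).Nonempty := fun s => (hT.diff s.finite_toSet).nonempty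
  exact ⟨chainV hwf T hne, chainV_strictMono hwf T hne, fun n => (chainV_mem hwf T hne n).1⟩

section Machine

variable {G : Type u} [Group G] [TopologicalSpace G] [IsTopologicalGroup G]
variable {β : Type u} [LinearOrder β] [WellFoundedLT β]
variable (A : Set G)

open Classical in
noncomputable def NNhd (X : Set G) : Set G := if X ∈ nhds (1 : G) then X else Set.univ

lemma NNhd_mem (X : Set G) : NNhd X ∈ nhds (1 : G) := by
  unfold NNhd
  split
  · assumption
  · exact Filter.univ_mem

lemma NNhd_eq {X : Set G} (h : X ∈ nhds (1 : G)) : NNhd X = X := by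
  unfold NNhd; exact if_pos h

variable (Key : ∀ (b : β) (g : {a : β // a < b} → Set G), (∀ a, g a ∈ nhds (1 : G)) →
  ∃ U, U ∈ nhds (1 : G) ∧ ∀ S : Finset {a : β // a < b},
    ∃ x, x ∈ A ∧ ∃ y, y ∈ A ∧ (∀ c ∈ S, x⁻¹ * y ∈ g c) ∧ x⁻¹ * y ∉ U)

noncomputable def MStep (b : β) (ih : ∀ a : β, a < b → Set G × Set G) : Set G × Set G :=
  let hk := Key b (fun a => NNhd ((ih a.1 a.2).2)) (fun _ => NNhd_mem _)
  (hk.choose, (exists_symm_quad hk.choose hk.choose_spec.1).choose)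

noncomputable def MD : β → Set G × Set G := wellFounded_lt.fix (MStep A Key)

lemma MD_eq (b : β) : MD A Key b = MStep A Key b (fun a _ => MD A Key a) :=
  WellFounded.fix_eq _ _ _

noncomputable def MKey (b : β) :=
  Key b (fun a : {a : β // a < b} => NNhd ((MD A Key a.1).2)) (fun _ => NNhd_mem _)

lemma MD_fst (b : β) : (MD A Key b).1 = (MKey A Key b).choose := by
  rw [MD_eq]; rfl

lemma MD_snd (b : β) :
    (MD A Key b).2 =
      (exists_symm_quad (MKey A Key b).choose (MKey A Key b).choose_spec.1).choose := by
  rw [MD_eq]; rfl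

lemma MD_fst_mem (b : β) : (MD A Key b).1 ∈ nhds (1 : G) := by
  rw [MD_fst]; exact (MKey A Key b).choose_spec.1

lemma MD_snd_spec (b : β) :
    IsOpen (MD A Key b).2 ∧ (1 : G) ∈ (MD A Key b).2 ∧
      (∀ g ∈ (MD A Key b).2, g⁻¹ ∈ (MD A Key b).2) ∧
      (∀ a ∈ (MD A Key b).2, ∀ p ∈ (MD A Key b).2, ∀ q ∈ (MD A Key b).2,
        ∀ r ∈ (MD A Key b).2, a * p * q * r ∈ (MD A Key b).1) := by
  rw [MD_fst, MD_snd]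
  exact (exists_symm_quad (MKey A Key b).choose (MKey A Key b).choose_spec.1).choose_spec

lemma MD_snd_mem (b : β) : (MD A Key b).2 ∈ nhds (1 : G) :=
  (MD_snd_spec A Key b).1.mem_nhds (MD_snd_spec A Key b).2.1

lemma MD_wit (b : β) : ∀ S : Finset {a : β // a < b},
    ∃ x, x ∈ A ∧ ∃ y, y ∈ A ∧ (∀ c ∈ S, x⁻¹ * y ∈ (MD A Key c.1).2) ∧
      x⁻¹ * y ∉ (MD A Key b).1 := by
  intro S
  obtain ⟨x, hx, y, hy, hmem, hnot⟩ := (MKey A Key b).choose_spec.2 S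
  refine ⟨x, hx, y, hy, fun c hc => ?_, by rwa [MD_fst]⟩
  have h2 : x⁻¹ * y ∈ NNhd (MD A Key c.1).2 := hmem c hc
  rwa [NNhd_eq (MD_snd_mem A Key c.1)] at h2

end Machine

section Step1

variable {G : Type u} [Group G] [TopologicalSpace G] [IsTopologicalGroup G]

lemma exists_small_trace_family (κ : Cardinal.{u}) (hκ : ℵ₀ ≤ κ)
    (hcal : Calibre (NbhdPoset (1 : G)) (Order.succ κ))
    (A : Set G)
    (hpre : ∀ U ∈ nhds (1 : G), ∃ F : Set G, F.Finite ∧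
      A ⊆ ⋃ g ∈ F, (fun x => g * x) '' U) :
    ∃ (ι : Type u) (Df : ι → Set G), #ι ≤ κ ∧ (∀ i, Df i ∈ nhds (1 : G)) ∧
      ∀ U ∈ nhds (1 : G), ∃ i, ∀ x ∈ A, ∀ y ∈ A, x⁻¹ * y ∈ Df i → x⁻¹ * y ∈ U := by
  classical
  by_contra hcon
  push_neg at hcon
  -- the well-ordered index type
  set Ot := (Order.succ κ).ord.ToType with hOt
  have segcard : ∀ b : Ot, #{a : Ot // a < b} ≤ κ := by
    intro b
    have h1 : #(Set.Iio b) < Order.succ κ := Cardinal.mk_Iio_ord_toType b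
    exact Order.lt_succ_iff.mp h1
  -- the key existence statement fed to the machine
  have Key : ∀ (b : Ot) (g : {a : Ot // a < b} → Set G), (∀ a, g a ∈ nhds (1 : G)) →
      ∃ U, U ∈ nhds (1 : G) ∧ ∀ S : Finset {a : Ot // a < b},
        ∃ x, x ∈ A ∧ ∃ y, y ∈ A ∧ (∀ c ∈ S, x⁻¹ * y ∈ g c) ∧ x⁻¹ * y ∉ U := by
    intro b g hg
    have hcard : #(Finset {a : Ot // a < b}) ≤ κ := by
      cases finite_or_infinite {a : Ot // a < b} with
      | inl h =>
          haveI := Fintype.ofFinite {a : Ot // a < b}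
          exact le_trans (le_of_lt (lt_aleph0_of_finite _)) hκ
      | inr h => rw [mk_finset_of_infinite]; exact segcard b
    have hnbhd : ∀ S : Finset {a : Ot // a < b}, (⋂ c ∈ S, g c) ∈ nhds (1 : G) :=
      fun S => (Filter.biInter_finset_mem S).mpr (fun c _ => hg c)
    obtain ⟨U, hU, hwit⟩ := hcon (Finset {a : Ot // a < b}) (fun S => ⋂ c ∈ S, g c) hcard hnbhd
    refine ⟨U, hU, fun S => ?_⟩
    obtain ⟨x, hx, y, hy, hmem, hnot⟩ := hwit S
    exact ⟨x, hx, y, hy, fun c hc => Set.mem_iInter₂.mp hmem c hc, hnot⟩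
  -- the transfinite sequence
  let D2 : Ot → Set G := fun b => (MD A Key b).2
  let fmap : Ot → NbhdPoset (1 : G) :=
    fun b => OrderDual.toDual ⟨D2 b, MD_snd_mem A Key b⟩
  have hcore : ∀ a b : Ot, a < b → D2 a = D2 b → False := by
    intro a b hab heq
    obtain ⟨x, hx, y, hy, hmem, hnot⟩ := MD_wit A Key b {⟨a, hab⟩}
    have hz : x⁻¹ * y ∈ D2 b := heq ▸ hmem ⟨a, hab⟩ (Finset.mem_singleton_self _)
    have h1 : (1 : G) ∈ D2 b := (MD_snd_spec A Key b).2.1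
    have hq := (MD_snd_spec A Key b).2.2.2 (x⁻¹ * y) hz 1 h1 1 h1 1 h1
    simp only [mul_one] at hq
    exact hnot hq
  have hinj : Function.Injective fmap := by
    intro a b hab
    by_contra hne
    have heq : D2 a = D2 b := congrArg (fun t => (OrderDual.ofDual t).1) hab
    rcases lt_or_gt_of_ne hne with h | h
    · exact hcore a b h heq
    · exact hcore b a h heq.symm
  have hScard : #(Set.range fmap) = Order.succ κ := by
    rw [mk_range_eq fmap hinj]
    exact Cardinal.mk_ord_toType _
  obtain ⟨T, hTS, hTinf, hTbdd⟩ := hcal (Set.range fmap) hScard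
  obtain ⟨vb, hvb⟩ := hTbdd
  set Vhat : Set G := (OrderDual.ofDual vb).1 with hVhatdef
  have hVhatmem : Vhat ∈ nhds (1 : G) := (OrderDual.ofDual vb).2
  have hVsub : ∀ b : Ot, fmap b ∈ T → Vhat ⊆ D2 b := by
    intro b hb
    have h1 : fmap b ≤ vb := hvb hb
    have h2 : OrderDual.ofDual vb ≤ (⟨D2 b, MD_snd_mem A Key b⟩ : {U : Set G // U ∈ nhds (1 : G)}) :=
      OrderDual.toDual_le.mp h1
    exact h2
  -- an increasing ω-sequence inside T
  have hT'inf : (fmap ⁻¹' T).Infinite := hTinf.preimage hTS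
  obtain ⟨v, hv, hvT⟩ := strictMono_in_of_infinite wellFounded_lt hT'inf
  -- witnesses along the sequence
  have hwit : ∀ n : ℕ, ∃ x, x ∈ A ∧ ∃ y, y ∈ A ∧
      (∀ k : ℕ, k ≤ n → x⁻¹ * y ∈ D2 (v k)) ∧ x⁻¹ * y ∉ (MD A Key (v (n + 1))).1 := by
    intro n
    obtain ⟨x, hx, y, hy, hmem, hnot⟩ := MD_wit A Key (v (n + 1))
      (Finset.univ.image (fun k : Fin (n + 1) => (⟨v k.1, hv k.2⟩ : {a : Ot // a < v (n + 1)})))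
    refine ⟨x, hx, y, hy, fun k hk => ?_, hnot⟩
    exact hmem ⟨v k, hv (Nat.lt_succ_of_le hk)⟩
      (Finset.mem_image.mpr ⟨⟨k, Nat.lt_succ_of_le hk⟩, Finset.mem_univ _, rfl⟩)
  choose x hx y hy hmem hnot using hwit
  -- a symmetric open V below Vhat, and V' with V'·V' ⊆ V
  obtain ⟨V, hVo, hV1, hVsym, hVquad⟩ := exists_symm_quad Vhat hVhatmem
  have hVVhat : V ⊆ Vhat := fun g hg => by
    have := hVquad g hg 1 hV1 1 hV1 1 hV1
    simpa using this
  obtain ⟨V', hV'o, hV'1, hV'sym, hV'quad⟩ := exists_symm_quad V (hVo.mem_nhds hV1)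
  have hV'pair : ∀ a ∈ V', ∀ b ∈ V', a * b ∈ V := fun a ha b hb => by
    have := hV'quad a ha b hb 1 hV'1 1 hV'1
    simpa using this
  obtain ⟨F, hFfin, hFcov⟩ := hpre V' (hV'o.mem_nhds hV'1)
  have hcovx : ∀ n : ℕ, ∃ g, g ∈ F ∧ ∃ w, w ∈ V' ∧ g * w = x n := by
    intro n
    obtain ⟨g, hg, hxg⟩ := Set.mem_iUnion₂.mp (hFcov (hx n))
    obtain ⟨w, hw, hgw⟩ := hxg
    exact ⟨g, hg, w, hw, hgw⟩
  have hcovy : ∀ n : ℕ, ∃ g, g ∈ F ∧ ∃ w, w ∈ V' ∧ g * w = y n := by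
    intro n
    obtain ⟨g, hg, hyg⟩ := Set.mem_iUnion₂.mp (hFcov (hy n))
    obtain ⟨w, hw, hgw⟩ := hyg
    exact ⟨g, hg, w, hw, hgw⟩
  choose gx hgxF wx hwx hgwx using hcovx
  choose gy hgyF wy hwy hgwy using hcovy
  -- pigeonhole
  haveI : Finite ↥F := hFfin.to_subtype
  obtain ⟨n, m, hnm, hpair⟩ := Finite.exists_ne_map_eq_of_infinite
    (fun n : ℕ => ((⟨gx n, hgxF n⟩ : ↥F), (⟨gy n, hgyF n⟩ : ↥F)))
  have hgx : gx n = gx m := congrArg (fun p => (p.1 : G)) hpair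
  have hgy : gy n = gy m := congrArg (fun p => (p.2 : G)) hpair
  have hxclose : (x n)⁻¹ * x m ∈ V := by
    rw [← hgwx n, ← hgwx m, ← hgx]
    have he : (gx n * wx n)⁻¹ * (gx n * wx m) = (wx n)⁻¹ * wx m := by group
    rw [he]
    exact hV'pair _ (hV'sym _ (hwx n)) _ (hwx m)
  have hyclose : (y n)⁻¹ * y m ∈ V := by
    rw [← hgwy n, ← hgwy m, ← hgy]
    have he : (gy n * wy n)⁻¹ * (gy n * wy m) = (wy n)⁻¹ * wy m := by group
    rw [he]
    exact hV'pair _ (hV'sym _ (hwy n)) _ (hwy m)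
  -- the core contradiction
  have core : ∀ n m : ℕ, n < m → (x n)⁻¹ * x m ∈ V → (y n)⁻¹ * y m ∈ V → False := by
    intro n m hlt h1 h2
    have hDmem : V ⊆ D2 (v (n + 1)) :=
      (hVVhat.trans (hVsub (v (n + 1)) (hvT (n + 1))))
    have hp : (x n)⁻¹ * x m ∈ D2 (v (n + 1)) := hDmem h1
    have hq : (x m)⁻¹ * y m ∈ D2 (v (n + 1)) := hmem m (n + 1) hlt
    have hr : (y m)⁻¹ * y n ∈ D2 (v (n + 1)) := by
      have h3 := hVsym _ h2
      rw [show ((y n)⁻¹ * y m)⁻¹ = (y m)⁻¹ * y n by group] at h3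
      exact hDmem h3
    have h1' : (1 : G) ∈ D2 (v (n + 1)) := (MD_snd_spec A Key (v (n + 1))).2.1
    have hquad := (MD_snd_spec A Key (v (n + 1))).2.2.2 _ hp _ hq _ hr 1 h1'
    have heqz : (x n)⁻¹ * x m * ((x m)⁻¹ * y m) * ((y m)⁻¹ * y n) * 1 = (x n)⁻¹ * y n := by
      group
    rw [heqz] at hquad
    exact hnot n hquad
  rcases hnm.lt_or_gt with h | h
  · exact core n m h hxclose hyclose
  · have h1 := hVsym _ hxclose
    have h2 := hVsym _ hyclose
    rw [show ((x n)⁻¹ * x m)⁻¹ = (x m)⁻¹ * x n by group] at h1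
    rw [show ((y n)⁻¹ * y m)⁻¹ = (y m)⁻¹ * y n by group] at h2
    exact core m n h h1 h2

end Step1

section Step2

variable {G : Type u} [Group G] [TopologicalSpace G] [IsTopologicalGroup G]

lemma image_mul_left_eq (c : G) (S : Set G) :
    (fun x => c * x) '' S = (fun x => c⁻¹ * x) ⁻¹' S := by
  ext z
  constructor
  · rintro ⟨w, hw, rfl⟩
    simpa [inv_mul_cancel_left] using hw
  · intro hz
    exact ⟨c⁻¹ * z, hz, by simp [mul_inv_cancel_left]⟩

theorem stmt13_aux {G : Type u} [Group G] [TopologicalSpace G] [IsTopologicalGroup G]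
    (κ : Cardinal.{u}) (hκ : ℵ₀ ≤ κ)
    (hcal : Calibre (NbhdPoset (1 : G)) (Order.succ κ))
    (A : Set G)
    (hpre : ∀ U ∈ nhds (1 : G), ∃ F : Set G, F.Finite ∧
      A ⊆ ⋃ g ∈ F, (fun x => g * x) '' U) :
    ∃ B : Set (Set A), #B ≤ κ ∧ TopologicalSpace.IsTopologicalBasis B := by
  classical
  obtain ⟨ι, Df, hι, hDf, hdom⟩ := exists_small_trace_family κ hκ hcal A hpre
  choose e heo he1 hesym hequad using fun i => exists_symm_quad (Df i) (hDf i)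
  choose F hFfin hFcov using fun i => hpre (e i) ((heo i).mem_nhds (he1 i))
  let Bs : (Σ i : ι, ↥(F i)) → Set ↥A := fun j =>
    if h : (A ∩ (fun x => (j.2 : G) * x) '' e j.1).Nonempty then
      Subtype.val ⁻¹' ((fun x => h.some * x) '' (e j.1 * e j.1))
    else ∅
  refine ⟨Set.range Bs, ?_, ?_⟩
  · have h1 : #(Set.range Bs) ≤ #(Σ i : ι, ↥(F i)) := mk_range_le
    have h2 : #(Σ i : ι, ↥(F i)) = Cardinal.sum (fun i => #(↥(F i))) := mk_sigma _
    have h3 : Cardinal.sum (fun i => #(↥(F i))) ≤ Cardinal.sum (fun _ : ι => ℵ₀) := by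
      apply Cardinal.sum_le_sum
      intro i
      haveI := (hFfin i).to_subtype
      exact le_of_lt (lt_aleph0_of_finite _)
    have h4 : Cardinal.sum (fun _ : ι => ℵ₀) = #ι * ℵ₀ := sum_const' _ _
    have h5 : #ι * ℵ₀ ≤ κ := by
      refine le_trans (Cardinal.mul_le_max _ _) ?_
      simp [hι, hκ]
    calc #(Set.range Bs) ≤ #(Σ i : ι, ↥(F i)) := h1
      _ ≤ κ := by rw [h2]; exact le_trans h3 (le_of_eq h4 |>.trans h5)
  · apply TopologicalSpace.isTopologicalBasis_of_isOpen_of_nhds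
    · rintro u ⟨j, rfl⟩
      by_cases h : (A ∩ (fun x => (j.2 : G) * x) '' e j.1).Nonempty
      · have hBj : Bs j = Subtype.val ⁻¹' ((fun x => h.some * x) '' (e j.1 * e j.1)) :=
          dif_pos h
        rw [hBj, image_mul_left_eq]
        exact (((heo j.1).mul_left).preimage (continuous_mul_left _)).preimage
          continuous_subtype_val
      · have hBj : Bs j = ∅ := dif_neg h
        rw [hBj]; exact isOpen_empty
    · intro a O haO hO
      obtain ⟨O', hO', hval⟩ := isOpen_induced_iff.mp hO
      have haO' : (a : G) ∈ O' := by
        rw [← hval] at haO; exact haO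
      have hUopen : IsOpen ((fun z => (a : G) * z) ⁻¹' O') := hO'.preimage (continuous_mul_left _)
      have hU1 : (1 : G) ∈ (fun z => (a : G) * z) ⁻¹' O' := by
        simpa using haO'
      obtain ⟨i, hi⟩ := hdom _ (hUopen.mem_nhds hU1)
      obtain ⟨g, hgF, hxg⟩ := Set.mem_iUnion₂.mp (hFcov i a.2)
      obtain ⟨w, hwe, hgw⟩ := hxg
      set j : Σ i : ι, ↥(F i) := ⟨i, ⟨g, hgF⟩⟩ with hj
      have hne : (A ∩ (fun x => (j.2 : G) * x) '' e j.1).Nonempty :=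
        ⟨(a : G), a.2, ⟨w, hwe, hgw⟩⟩
      have hBj : Bs j = Subtype.val ⁻¹' ((fun x => hne.some * x) '' (e j.1 * e j.1)) :=
        dif_pos hne
      obtain ⟨hcA, wc, hwc, hgwc⟩ : hne.some ∈ A ∧ ∃ wc, wc ∈ e i ∧ g * wc = hne.some := by
        have := hne.some_mem
        exact ⟨this.1, this.2⟩
      refine ⟨Bs j, Set.mem_range_self j, ?_, ?_⟩
      · rw [hBj]
        refine ⟨wc⁻¹ * w, Set.mul_mem_mul (hesym i wc hwc) hwe, ?_⟩
        rw [← hgwc, ← hgw]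
        group
      · rw [hBj, ← hval]
        rintro b ⟨z, hz, hcz⟩
        obtain ⟨p, hp, q, hq, hpq⟩ := Set.mem_mul.mp hz
        have hzin : (a : G)⁻¹ * (b : G) ∈ Df i := by
          have heq : (a : G)⁻¹ * (b : G) = w⁻¹ * wc * p * q := by
            rw [← hcz, ← hpq, ← hgwc, ← hgw]
            group
          rw [heq]
          exact hequad i _ (hesym i w hwe) _ hwc _ hp _ hq
        have := hi (a : G) a.2 (b : G) b.2 hzin
        have hb : (b : G) ∈ O' := by
          have h2 : (a : G) * ((a : G)⁻¹ * (b : G)) ∈ O' := this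
          simpa [mul_inv_cancel_left] using h2
        exact hb
end Step2

/-- In a topological group whose neighborhood filter of the identity has calibre
`(κ⁺, ω)`, every precompact subset has a topological base of cardinality at most `κ`. -/
theorem stmt13 {G : Type u} [Group G] [TopologicalSpace G] [IsTopologicalGroup G]
    (κ : Cardinal.{u}) (hκ : ℵ₀ ≤ κ)
    (hcal : Calibre (NbhdPoset (1 : G)) (Order.succ κ))
    (A : Set G)
    (hpre : ∀ U ∈ nhds (1 : G), ∃ F : Set G, F.Finite ∧
      A ⊆ ⋃ g ∈ F, (fun x => g * x) '' U) :
    ∃ B : Set (Set A), #B ≤ κ ∧ TopologicalSpace.IsTopologicalBasis B :=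
  stmt13_aux κ hκ hcal A hpre
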